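/- arXiv:2312.07450 — 4 statements merged into one kernel-verified Lean document; each statement's English description precedes it below -/
import Mathlib

section
/- Let R be a commutative ring and s_1,…,s_n, t_1,…,t_n ∈ R. Define x_{1j} = s_1 t_j + s_j t_1 and x_{ij} = s_i t_j for 1 < i < j. Then for all indices 1 < i_2 < j_1 < j_2 < j_3 < i_3 ≤ n, the 3×3 matrix with rows (x_{1,j_1}, x_{1,j_2}, x_{1,j_3}), (x_{i_2,j_1}, x_{i_2,j_2}, x_{i_2,j_3}), (−x_{j_1,i_3}, −x_{j_2,i_3}, −x_{j_3,i_3}) has determinant zero. -/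
/-- Let `x_{1j} = s_1 t_j + s_j t_1` and `x_{ij} = s_i t_j` for `1 < i < j ≤ n` over a
commutative ring. Then for all `1 < i₂ < j₁ < j₂ < j₃ < i₃ ≤ n`, the 3×3 matrix with
rows `(x_{1,j₁}, x_{1,j₂}, x_{1,j₃})`, `(x_{i₂,j₁}, x_{i₂,j₂}, x_{i₂,j₃})`,
`(−x_{j₁,i₃}, −x_{j₂,i₃}, −x_{j₃,i₃})` has determinant zero. -/
theorem rank_factorization_three_by_three_minors {R : Type*} [CommRing R] (n : ℕ)
    (s t : ℕ → R) (x : ℕ → ℕ → R)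
    (hx1 : ∀ j, 1 < j → j ≤ n → x 1 j = s 1 * t j + s j * t 1)
    (hx : ∀ i j, 1 < i → i < j → j ≤ n → x i j = s i * t j) :
    ∀ i₂ j₁ j₂ j₃ i₃, 1 < i₂ → i₂ < j₁ → j₁ < j₂ → j₂ < j₃ → j₃ < i₃ → i₃ ≤ n →
      Matrix.det !![x 1 j₁, x 1 j₂, x 1 j₃;
                    x i₂ j₁, x i₂ j₂, x i₂ j₃;
                    -(x j₁ i₃), -(x j₂ i₃), -(x j₃ i₃)] = 0 := by
  intro i2 j1 j2 j3 i3 h1 h2 h3 h4 h5 h6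
  rw [hx1 j1 (h1.trans h2) (by omega), hx1 j2 (by omega) (by omega),
      hx1 j3 (by omega) (by omega),
      hx i2 j1 h1 h2 (by omega), hx i2 j2 h1 (by omega) (by omega),
      hx i2 j3 h1 (by omega) (by omega),
      hx j1 i3 (by omega) (by omega) h6, hx j2 i3 (by omega) (by omega) h6,
      hx j3 i3 (by omega) (by omega) h6]
  simp [Matrix.det_fin_three]
  ring
end

section
/- Let Δ_n be the simplicial complex on the ground set S_n = {(i,j) : 1 ≤ i < j ≤ n} whose minimal non-faces are {(i,ℓ),(j,k)} for 1 < i < j < k < ℓ ≤ n and {(1,j_1),(i_2,j_2),(j_3,i_3)} for 1 < i_2 < j_1 < j_2 < j_3 < i_3 ≤ n. Then for n ≥ 6, every set of the form F = {(1,2),(1,n−2),(1,n−1),(1,n)} ∪ D, where D is a Dyck path from (2,3) to (n−1,n), is a facet of Δ_n of cardinality 2n−1. -/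
private lemma prod_eq' {x : ℕ × ℕ} {a b : ℕ} (h1 : x.1 = a) (h2 : x.2 = b) : x = (a, b) := by
  cases x; simp_all

private lemma ivt_aux (f : ℕ → ℕ) :
    ∀ m, (∀ i < m, f (i+1) = f i ∨ f (i+1) = f i + 1) →
      ∀ a, f 0 ≤ a → a ≤ f m → ∃ i, i ≤ m ∧ f i = a := by
  intro m
  induction m with
  | zero => exact fun _ a h1 h2 => ⟨0, le_refl 0, le_antisymm h1 h2⟩
  | succ m ih =>
    intro hstep a h1 h2
    by_cases hc : a ≤ f m
    · obtain ⟨i, hi, hfi⟩ := ih (fun i hi => hstep i (by omega)) a h1 hc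
      exact ⟨i, by omega, hfi⟩
    · rcases hstep m (by omega) with h | h
      · exact ⟨m+1, le_refl _, by omega⟩
      · exact ⟨m+1, le_refl _, by omega⟩

private lemma mono_aux (f : ℕ → ℕ) (m : ℕ)
    (hstep : ∀ i < m, f i ≤ f (i+1)) :
    ∀ j, j ≤ m → ∀ i, i ≤ j → f i ≤ f j := by
  intro j
  induction j with
  | zero => intro _ i hi; rw [Nat.le_zero.mp hi]
  | succ j ih =>
    intro hjm i hij
    by_cases h : i = j + 1
    · rw [h]
    · exact le_trans (ih (by omega) i (by omega)) (hstep j (by omega))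



/-- The ground set `S_n = {(i,j) : 1 ≤ i < j ≤ n}`. -/
def groundSet (n : ℕ) : Finset (ℕ × ℕ) :=
  ((Finset.range (n + 1)) ×ˢ (Finset.range (n + 1))).filter
    (fun p => 1 ≤ p.1 ∧ p.1 < p.2)

/-- The minimal non-faces of the complex `Δ_n`: the pairs `{(i,ℓ),(j,k)}` with
`1 < i < j < k < ℓ ≤ n` and the triples `{(1,j₁),(i₂,j₂),(j₃,i₃)}` with
`1 < i₂ < j₁ < j₂ < j₃ < i₃ ≤ n`. -/
def IsMinNonface (n : ℕ) (N : Finset (ℕ × ℕ)) : Prop :=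
  (∃ i j k ℓ, 1 < i ∧ i < j ∧ j < k ∧ k < ℓ ∧ ℓ ≤ n ∧
    N = {(i, ℓ), (j, k)}) ∨
  (∃ i₂ j₁ j₂ j₃ i₃, 1 < i₂ ∧ i₂ < j₁ ∧ j₁ < j₂ ∧ j₂ < j₃ ∧ j₃ < i₃ ∧ i₃ ≤ n ∧
    N = {(1, j₁), (i₂, j₂), (j₃, i₃)})

/-- Faces of `Δ_n`: subsets of the ground set containing no minimal non-face. -/
def IsFaceDelta (n : ℕ) (F : Finset (ℕ × ℕ)) : Prop :=
  F ⊆ groundSet n ∧ ∀ N, IsMinNonface n N → ¬ N ⊆ F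

/-- Facets of `Δ_n`: faces maximal with respect to inclusion. -/
def IsFacetDelta (n : ℕ) (F : Finset (ℕ × ℕ)) : Prop :=
  IsFaceDelta n F ∧ ∀ F', IsFaceDelta n F' → F ⊆ F' → F = F'

/-- `D` is (the set of lattice points of) a Dyck path from `(2,3)` to `(n−1,n)`: a
monotone lattice path with steps `(1,0)` and `(0,1)` all of whose points `(a,b)`
satisfy `a < b`. -/
def IsDyckSet (n : ℕ) (D : Finset (ℕ × ℕ)) : Prop :=
  ∃ (m : ℕ) (p : ℕ → ℕ × ℕ), p 0 = (2, 3) ∧ p m = (n - 1, n) ∧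
    (∀ i < m, p (i + 1) = ((p i).1 + 1, (p i).2) ∨ p (i + 1) = ((p i).1, (p i).2 + 1)) ∧
    (∀ i ≤ m, (p i).1 < (p i).2) ∧
    D = (Finset.range (m + 1)).image p

/-- For `n ≥ 6`, every set `F = {(1,2),(1,n−2),(1,n−1),(1,n)} ∪ D`, where `D` is a Dyck
path from `(2,3)` to `(n−1,n)`, is a facet of `Δ_n` of cardinality `2n − 1`. -/
theorem dyck_union_is_facet (n : ℕ) (hn : 6 ≤ n) (D : Finset (ℕ × ℕ))
    (hD : IsDyckSet n D) :
    IsFacetDelta n (({(1, 2), (1, n - 2), (1, n - 1), (1, n)} : Finset (ℕ × ℕ)) ∪ D) ∧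
    (({(1, 2), (1, n - 2), (1, n - 1), (1, n)} : Finset (ℕ × ℕ)) ∪ D).card = 2 * n - 1 := by
  obtain ⟨m, p, h0, hm, hstep, hdyck, hDeq⟩ := hD
  have h01 : (p 0).1 = 2 := by rw [h0]
  have h02 : (p 0).2 = 3 := by rw [h0]
  have hm1 : (p m).1 = n - 1 := by rw [hm]
  have hm2 : (p m).2 = n := by rw [hm]
  have hstep' : ∀ i < m, ((p (i+1)).1 = (p i).1 + 1 ∧ (p (i+1)).2 = (p i).2) ∨
      ((p (i+1)).1 = (p i).1 ∧ (p (i+1)).2 = (p i).2 + 1) := by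
    intro i hi
    rcases hstep i hi with h | h
    · left; rw [h]; exact ⟨rfl, rfl⟩
    · right; rw [h]; exact ⟨rfl, rfl⟩
  have hmono1 : ∀ j, j ≤ m → ∀ i, i ≤ j → (p i).1 ≤ (p j).1 := by
    refine mono_aux (fun i => (p i).1) m ?_
    intro i hi; show (p i).1 ≤ (p (i+1)).1
    rcases hstep' i hi with ⟨h, _⟩ | ⟨h, _⟩ <;> omega
  have hmono2 : ∀ j, j ≤ m → ∀ i, i ≤ j → (p i).2 ≤ (p j).2 := by
    refine mono_aux (fun i => (p i).2) m ?_
    intro i hi; show (p i).2 ≤ (p (i+1)).2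
    rcases hstep' i hi with ⟨_, h⟩ | ⟨_, h⟩ <;> omega
  have hlb1 : ∀ i, i ≤ m → 2 ≤ (p i).1 := fun i hi => h01 ▸ hmono1 i hi 0 (Nat.zero_le _)
  have hub1 : ∀ i, i ≤ m → (p i).1 ≤ n - 1 := fun i hi => hm1 ▸ hmono1 m le_rfl i hi
  have hlb2 : ∀ i, i ≤ m → 3 ≤ (p i).2 := fun i hi => h02 ▸ hmono2 i hi 0 (Nat.zero_le _)
  have hub2 : ∀ i, i ≤ m → (p i).2 ≤ n := fun i hi => hm2 ▸ hmono2 m le_rfl i hi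
  have hsum : ∀ i, i ≤ m → (p i).1 + (p i).2 = 5 + i := by
    intro i
    induction i with
    | zero => intro _; rw [h0]; rfl
    | succ i ih =>
      intro him
      have hih := ih (by omega)
      rcases hstep' i (by omega) with ⟨h1, h2⟩ | ⟨h1, h2⟩ <;> omega
  have hmval : m = 2 * n - 6 := by
    have := hsum m le_rfl; omega
  have hmemD : ∀ x : ℕ × ℕ, x ∈ D ↔ ∃ i, i ≤ m ∧ p i = x := by
    intro x
    simp [hDeq, Finset.mem_image, Finset.mem_range, Nat.lt_succ_iff]
  -- entering a column
  have hEnter : ∀ a i, 1 ≤ i → i ≤ m → (p i).1 = a → (p (i-1)).1 ≠ a →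
      p (i-1) = (a - 1, (p i).2) := by
    intro a i hi1 him hia hne
    have hi' : i - 1 + 1 = i := by omega
    rcases hstep' (i-1) (by omega) with ⟨h1, h2⟩ | ⟨h1, h2⟩ <;> rw [hi'] at h1 h2
    · exact prod_eq' (by omega) (by omega)
    · omega
  -- least index in a column
  have hCol : ∀ a, 2 ≤ a → a ≤ n - 1 → ∃ i, i ≤ m ∧ (p i).1 = a ∧ ∀ j, j < i → (p j).1 ≠ a := by
    intro a ha1 ha2
    have hex : ∃ i, i ≤ m ∧ (p i).1 = a := by
      refine ivt_aux (fun i => (p i).1) m ?_ a (by show (p 0).1 ≤ a; omega)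
        (by show a ≤ (p m).1; omega)
      intro i hi
      show (p (i+1)).1 = (p i).1 ∨ (p (i+1)).1 = (p i).1 + 1
      rcases hstep' i hi with ⟨h, _⟩ | ⟨h, _⟩ <;> omega
    have hi := Nat.find_spec hex
    refine ⟨Nat.find hex, hi.1, hi.2, ?_⟩
    intro j hj hja
    exact Nat.find_min hex hj ⟨by omega, hja⟩
  -- contiguity within a column
  have hContig : ∀ i j, i ≤ j → j ≤ m → (p i).1 = (p j).1 →
      ∀ c, (p i).2 ≤ c → c ≤ (p j).2 → ((p i).1, c) ∈ D := by
    intro i j hij hjm hcol c hc1 hc2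
    have hex : ∃ t, t ≤ j - i ∧ (p (i + t)).2 = c := by
      refine ivt_aux (fun t => (p (i + t)).2) (j - i) ?_ c (by show (p (i+0)).2 ≤ c; simpa using hc1) ?_
      · intro t ht
        show (p (i + (t+1))).2 = (p (i + t)).2 ∨ (p (i + (t+1))).2 = (p (i + t)).2 + 1
        have h1 : i + (t + 1) = (i + t) + 1 := by omega
        rcases hstep' (i + t) (by omega) with ⟨_, h⟩ | ⟨_, h⟩ <;> rw [h1] <;> omega
      · show c ≤ (p (i + (j - i))).2
        have h2 : i + (j - i) = j := by omega
        rw [h2]; exact hc2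
    obtain ⟨t, ht, htc⟩ := hex
    have hk : i + t ≤ m := by omega
    have hf1 : (p (i + t)).1 = (p i).1 := by
      have g1 := hmono1 (i + t) hk i (by omega)
      have g2 := hmono1 j hjm (i + t) (by omega)
      omega
    rw [hmemD]
    exact ⟨i + t, hk, prod_eq' hf1 htc⟩
  -- Lemma A: a crossing point above b
  have hA : ∀ b, 3 ≤ b → b + 1 ≤ n → ∃ c, 2 ≤ c ∧ c < b ∧ (c, b + 1) ∈ D := by
    intro b hb1 hb2
    have hex : ∃ i, i ≤ m ∧ (p i).2 = b + 1 := by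
      refine ivt_aux (fun i => (p i).2) m ?_ (b+1) (by show (p 0).2 ≤ b+1; omega)
        (by show b+1 ≤ (p m).2; omega)
      intro i hi
      show (p (i+1)).2 = (p i).2 ∨ (p (i+1)).2 = (p i).2 + 1
      rcases hstep' i hi with ⟨_, h⟩ | ⟨_, h⟩ <;> omega
    obtain ⟨i, him, hib, hmin⟩ :
        ∃ i, i ≤ m ∧ (p i).2 = b + 1 ∧ ∀ j, j < i → (p j).2 ≠ b + 1 := by
      have hs := Nat.find_spec hex
      refine ⟨Nat.find hex, hs.1, hs.2, ?_⟩
      intro j hj hc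
      exact Nat.find_min hex hj ⟨by omega, hc⟩
    have hi1 : 1 ≤ i := by
      rcases Nat.eq_zero_or_pos i with h | h
      · rw [h] at hib; omega
      · exact h
    have hprev : (p (i-1)).2 ≠ b + 1 := hmin (i-1) (by omega)
    have hprevle : (p (i-1)).2 ≤ (p i).2 := hmono2 i him (i-1) (by omega)
    have hi' : i - 1 + 1 = i := by omega
    rcases hstep' (i-1) (by omega) with ⟨h1, h2⟩ | ⟨h1, h2⟩ <;> rw [hi'] at h1 h2
    · omega
    · have hd : (p (i-1)).1 < (p (i-1)).2 := hdyck (i-1) (by omega)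
      refine ⟨(p i).1, hlb1 i him, by omega, ?_⟩
      rw [hmemD]
      exact ⟨i, him, prod_eq' rfl hib⟩
  -- Key lemma: any ground element not in F extends to a min nonface within insert x D
  have hKey : ∀ a b, 1 ≤ a → a < b → b ≤ n →
      (a, b) ∉ (({(1, 2), (1, n - 2), (1, n - 1), (1, n)} : Finset (ℕ × ℕ)) ∪ D) →
      ∃ N, IsMinNonface n N ∧ N ⊆ insert (a, b) D := by
    intro a b ha hab hbn hxF
    simp only [Finset.mem_union, Finset.mem_insert, Finset.mem_singleton, Prod.mk.injEq,
      not_or] at hxF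
    obtain ⟨⟨hx1, hx2, hx3, hx4⟩, hxD⟩ := hxF
    by_cases ha1 : a = 1
    · subst ha1
      have hb3 : 3 ≤ b := by
        rcases Nat.lt_or_ge b 3 with h | h
        · exfalso; apply hx1; omega
        · exact h
      have hbn3 : b ≤ n - 3 := by
        by_contra h
        rcases (by omega : b = n - 2 ∨ b = n - 1 ∨ b = n) with h | h | h
        · exact hx2 ⟨rfl, h⟩
        · exact hx3 ⟨rfl, h⟩
        · exact hx4 ⟨rfl, h⟩
      obtain ⟨c, hc2, hcb, hcD⟩ := hA b hb3 (by omega)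
      refine ⟨{(1, b), (c, b + 1), (n - 1, n)}, Or.inr ⟨c, b, b + 1, n - 1, n,
        by omega, hcb, by omega, by omega, by omega, le_rfl, rfl⟩, ?_⟩
      intro y hy
      simp only [Finset.mem_insert, Finset.mem_singleton] at hy
      rcases hy with rfl | rfl | rfl
      · exact Finset.mem_insert_self _ _
      · exact Finset.mem_insert_of_mem hcD
      · exact Finset.mem_insert_of_mem ((hmemD _).mpr ⟨m, le_rfl, hm⟩)
    · -- a ≥ 2
      have ha2 : 2 ≤ a := by omega
      have han : a ≤ n - 1 := by omega
      obtain ⟨i₁, hi₁m, hi₁a, hi₁min⟩ := hCol a ha2 han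
      set d₁ := (p i₁).2 with hd₁
      have hd₁n : d₁ ≤ n := hub2 i₁ hi₁m
      have had₁ : a < d₁ := hi₁a ▸ hdyck i₁ hi₁m
      rcases lt_trichotomy b d₁ with hbd | hbd | hbd
      · -- b < d₁ : path enters column a above b; nested outside
        have hi₁pos : 1 ≤ i₁ := by
          rcases Nat.eq_zero_or_pos i₁ with h | h
          · exfalso
            rw [h] at hi₁a hd₁
            rw [h01] at hi₁a
            omega
          · exact h
        have hne : (p (i₁ - 1)).1 ≠ a := hi₁min (i₁ - 1) (by omega)
        have hpe := hEnter a i₁ hi₁pos hi₁m hi₁a hne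
        have ha3 : 3 ≤ a := by
          have := hlb1 (i₁ - 1) (by omega)
          rw [hpe] at this
          simpa using by
            have : (a - 1, d₁).1 = a - 1 := rfl
            omega
        refine ⟨{(a - 1, d₁), (a, b)}, Or.inl ⟨a - 1, a, b, d₁,
          by omega, by omega, hab, hbd, hd₁n, rfl⟩, ?_⟩
        intro y hy
        simp only [Finset.mem_insert, Finset.mem_singleton] at hy
        rcases hy with rfl | rfl
        · refine Finset.mem_insert_of_mem ((hmemD _).mpr ⟨i₁ - 1, by omega, hpe⟩)
        · exact Finset.mem_insert_self _ _
      · exact absurd ((hmemD _).mpr ⟨i₁, hi₁m, prod_eq' hi₁a hbd.symm⟩) hxD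
      · -- b > d₁
        by_cases hatop : a = n - 1
        · exfalso
          apply hxD
          have := hContig i₁ m hi₁m le_rfl (by omega) b (by omega) (by omega)
          rwa [hi₁a] at this
        · have han2 : a + 1 ≤ n - 1 := by omega
          obtain ⟨i₃, hi₃m, hi₃a, hi₃min⟩ := hCol (a+1) (by omega) han2
          set d₂ := (p i₃).2 with hd₂
          have hi₃pos : 1 ≤ i₃ := by
            rcases Nat.eq_zero_or_pos i₃ with h | h
            · exfalso; rw [h, h01] at hi₃a; omega
            · exact h
          have hne : (p (i₃ - 1)).1 ≠ a + 1 := hi₃min (i₃ - 1) (by omega)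
          have hpe := hEnter (a+1) i₃ hi₃pos hi₃m hi₃a hne
          have had₂ : a + 1 < d₂ := hi₃a ▸ hdyck i₃ hi₃m
          have hi₁i₃ : i₁ < i₃ := by
            by_contra h
            have := hmono1 i₁ hi₁m i₃ (by omega)
            omega
          rcases Nat.lt_or_ge d₂ b with hbd₂ | hbd₂
          · -- nested inside: (a+1, d₂) inside (a, b)
            refine ⟨{(a, b), (a + 1, d₂)}, Or.inl ⟨a, a + 1, d₂, b,
              by omega, by omega, had₂, hbd₂, hbn, rfl⟩, ?_⟩
            intro y hy
            simp only [Finset.mem_insert, Finset.mem_singleton] at hy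
            rcases hy with rfl | rfl
            · exact Finset.mem_insert_self _ _
            · exact Finset.mem_insert_of_mem ((hmemD _).mpr ⟨i₃, hi₃m, prod_eq' hi₃a rfl⟩)
          · -- b ≤ d₂ : contiguity gives (a,b) ∈ D
            exfalso
            apply hxD
            have hpm1 : (p (i₃ - 1)).1 = a := by rw [hpe]; simp
            have hpm2 : (p (i₃ - 1)).2 = d₂ := by rw [hpe]
            have := hContig i₁ (i₃ - 1) (by omega) (by omega)
              (by rw [hi₁a, hpm1]) b (by omega) (by omega)
            rwa [hi₁a] at this
  -- no nested pair inside D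
  have hNoNest : ∀ i j k ℓ, (i, ℓ) ∈ D → (j, k) ∈ D → i < j → k < ℓ → False := by
    intro i j k ℓ hil hjk hij hkl
    obtain ⟨s, hsm, hps⟩ := (hmemD _).mp hil
    obtain ⟨t, htm, hpt⟩ := (hmemD _).mp hjk
    have hst : s < t := by
      by_contra h
      have := hmono1 s hsm t (by omega)
      rw [hps, hpt] at this
      simp at this; omega
    have := hmono2 t htm s (by omega)
    rw [hps, hpt] at this
    simp at this; omega
  -- F is a face
  have hface : IsFaceDelta n (({(1, 2), (1, n - 2), (1, n - 1), (1, n)} : Finset (ℕ × ℕ)) ∪ D) := by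
    constructor
    · intro x hx
      simp only [Finset.mem_union, Finset.mem_insert, Finset.mem_singleton] at hx
      simp only [groundSet, Finset.mem_filter, Finset.mem_product, Finset.mem_range]
      rcases hx with (rfl | rfl | rfl | rfl) | h
      · exact ⟨⟨by omega, by omega⟩, by omega, by omega⟩
      · exact ⟨⟨by omega, by omega⟩, by omega, by omega⟩
      · exact ⟨⟨by omega, by omega⟩, by omega, by omega⟩
      · exact ⟨⟨by omega, by omega⟩, by omega, by omega⟩
      · obtain ⟨i, him, hpi⟩ := (hmemD _).mp h
        have g1 := hlb1 i him
        have g2 := hub2 i him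
        have g3 := hdyck i him
        rw [hpi] at g1 g2 g3
        exact ⟨⟨by omega, by omega⟩, by omega, g3⟩
    · rintro N hN hNsub
      rcases hN with ⟨i, j, k, ℓ, hi, hij, hjk, hkl, hln, rfl⟩ |
        ⟨i2, j1, j2, j3, i3, g1, g2, g3, g4, g5, g6, rfl⟩
      · have hil : (i, ℓ) ∈ _ := hNsub (by simp)
        have hjk : (j, k) ∈ _ := hNsub (by simp)
        simp only [Finset.mem_union, Finset.mem_insert, Finset.mem_singleton,
          Prod.mk.injEq] at hil hjk
        have hilD : (i, ℓ) ∈ D := by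
          rcases hil with (⟨h, _⟩ | ⟨h, _⟩ | ⟨h, _⟩ | ⟨h, _⟩) | h
          any_goals omega
        have hjkD : (j, k) ∈ D := by
          rcases hjk with (⟨h, _⟩ | ⟨h, _⟩ | ⟨h, _⟩ | ⟨h, _⟩) | h
          any_goals omega
        exact hNoNest i j k ℓ hilD hjkD hij hkl
      · have hj1 : (1, j1) ∈ _ := hNsub (by simp)
        simp only [Finset.mem_union, Finset.mem_insert, Finset.mem_singleton,
          Prod.mk.injEq] at hj1
        rcases hj1 with (⟨_, h⟩ | ⟨_, h⟩ | ⟨_, h⟩ | ⟨_, h⟩) | h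
        any_goals omega
        obtain ⟨i, him, hpi⟩ := (hmemD _).mp h
        have := hlb1 i him
        rw [hpi] at this
        simp at this
  refine ⟨⟨hface, ?_⟩, ?_⟩
  · -- maximality
    intro F' hF' hsub
    refine Finset.Subset.antisymm hsub ?_
    intro x hx
    by_contra hxF
    obtain ⟨hF'g, hF'nf⟩ := hF'
    have hxg := hF'g hx
    simp only [groundSet, Finset.mem_filter, Finset.mem_product, Finset.mem_range] at hxg
    obtain ⟨⟨hxa, hxb⟩, hxa1, hxab⟩ := hxg
    obtain ⟨a, b⟩ := x
    obtain ⟨N, hNmin, hNsub⟩ := hKey a b hxa1 hxab (by omega) hxF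
    apply hF'nf N hNmin
    intro y hy
    rcases Finset.mem_insert.mp (hNsub hy) with rfl | hyD
    · exact hx
    · exact hsub (Finset.mem_union_right _ hyD)
  · -- cardinality
    have hDcard : D.card = m + 1 := by
      rw [hDeq, Finset.card_image_of_injOn, Finset.card_range]
      intro i hi j hj hij
      simp only [Finset.coe_range, Set.mem_Iio] at hi hj
      have g1 := hsum i (by omega)
      have g2 := hsum j (by omega)
      rw [hij] at g1
      omega
    have hdisj : Disjoint ({(1, 2), (1, n - 2), (1, n - 1), (1, n)} : Finset (ℕ × ℕ)) D := by
      rw [Finset.disjoint_left]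
      intro x hxs hxD
      obtain ⟨i, him, hpi⟩ := (hmemD _).mp hxD
      have := hlb1 i him
      rw [hpi] at this
      simp only [Finset.mem_insert, Finset.mem_singleton] at hxs
      rcases hxs with rfl | rfl | rfl | rfl <;> simp at this
    have hscard : ({(1, 2), (1, n - 2), (1, n - 1), (1, n)} : Finset (ℕ × ℕ)).card = 4 := by
      rw [Finset.card_insert_of_notMem (by simp [Prod.mk.injEq]; omega),
        Finset.card_insert_of_notMem (by simp [Prod.mk.injEq]; omega),
        Finset.card_insert_of_notMem (by simp [Prod.mk.injEq]; omega),
        Finset.card_singleton]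
    rw [Finset.card_union_of_disjoint hdisj, hscard, hDcard]
    omega
end

section
/- Let M be the monomial ideal in K[x_{ij} : 1 ≤ i < j ≤ n] (field K, n ≥ 6) generated by x_{i,ℓ}x_{j,k} for 1 < i < j < k < ℓ ≤ n and x_{1,j_1}x_{i_2,j_2}x_{j_3,i_3} for 1 < i_2 < j_1 < j_2 < j_3 < i_3 ≤ n. Then no monomial in the variables of the set U = {x_{1,2}, x_{1,n−2}, x_{1,n−1}, x_{1,n}} ∪ {x_{i,i+1} : 2 ≤ i ≤ n−1} ∪ {x_{i,i+2} : 2 ≤ i ≤ n−2} lies in M; i.e., K[U] ∩ M = {0}. -/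
open MvPolynomial

/-- Let `M` be the monomial ideal in `K[x_{ij} : 1 ≤ i < j ≤ n]` (`n ≥ 6`) generated by
`x_{i,ℓ} x_{j,k}` for `1 < i < j < k < ℓ ≤ n` and `x_{1,j₁} x_{i₂,j₂} x_{j₃,i₃}` for
`1 < i₂ < j₁ < j₂ < j₃ < i₃ ≤ n`.  Then the subalgebra `K[U]` generated by the variables
in `U = {x_{1,2}, x_{1,n−2}, x_{1,n−1}, x_{1,n}} ∪ {x_{i,i+1}} ∪ {x_{i,i+2}}` meets `M`
only in `0`. -/
theorem subring_U_meets_ideal_trivially {K : Type*} [Field K] (n : ℕ) (hn : 6 ≤ n)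
    (f : MvPolynomial (ℕ × ℕ) K)
    (hfM : f ∈ Ideal.span { m : MvPolynomial (ℕ × ℕ) K |
      (∃ i j k ℓ, 1 < i ∧ i < j ∧ j < k ∧ k < ℓ ∧ ℓ ≤ n ∧
        m = X (i, ℓ) * X (j, k)) ∨
      (∃ i₂ j₁ j₂ j₃ i₃, 1 < i₂ ∧ i₂ < j₁ ∧ j₁ < j₂ ∧ j₂ < j₃ ∧ j₃ < i₃ ∧ i₃ ≤ n ∧
        m = X (1, j₁) * X (i₂, j₂) * X (j₃, i₃)) })
    (hfU : f ∈ Algebra.adjoin K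
      ((fun p : ℕ × ℕ => (X p : MvPolynomial (ℕ × ℕ) K)) ''
        (({(1, 2), (1, n - 2), (1, n - 1), (1, n)} : Set (ℕ × ℕ)) ∪
          {p | ∃ i, 2 ≤ i ∧ i ≤ n - 1 ∧ p = (i, i + 1)} ∪
          {p | ∃ i, 2 ≤ i ∧ i ≤ n - 2 ∧ p = (i, i + 2)}))) :
    f = 0 := by
  classical
  set S : Set (ℕ × ℕ) :=
    ({(1, 2), (1, n - 2), (1, n - 1), (1, n)} : Set (ℕ × ℕ)) ∪
      {p | ∃ i, 2 ≤ i ∧ i ≤ n - 1 ∧ p = (i, i + 1)} ∪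
      {p | ∃ i, 2 ≤ i ∧ i ≤ n - 2 ∧ p = (i, i + 2)} with hS
  set g : ℕ × ℕ → MvPolynomial (ℕ × ℕ) K := fun p => if p ∈ S then X p else 0 with hg
  have hfix : aeval g f = f := by
    refine Algebra.adjoin_induction ?_ ?_ ?_ ?_ hfU
    · rintro x ⟨p, hp, rfl⟩
      simp [hg, aeval_X, if_pos hp]
    · intro r; simp
    · intro x y _ _ hx hy; rw [map_add, hx, hy]
    · intro x y _ _ hx hy; rw [map_mul, hx, hy]
  have hzero : aeval g f = 0 := by
    refine Submodule.span_induction ?_ ?_ ?_ ?_ hfM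
    · rintro m (⟨i, j, k, ℓ, h1, h2, h3, h4, h5, rfl⟩ |
        ⟨i₂, j₁, j₂, j₃, i₃, h1, h2, h3, h4, h5, h6, rfl⟩)
      · have hnot : (i, ℓ) ∉ S := by
          intro h
          simp only [hS, Set.mem_union, Set.mem_insert_iff, Set.mem_singleton_iff,
            Set.mem_setOf_eq, Prod.mk.injEq] at h
          rcases h with ((⟨a1, a2⟩ | ⟨a1, a2⟩ | ⟨a1, a2⟩ | ⟨a1, a2⟩) |
            ⟨a, b1, b2, b3, b4⟩) | ⟨a, b1, b2, b3, b4⟩ <;> omega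
        simp [hg, if_neg hnot]
      · have hnot : ((1 : ℕ), j₁) ∉ S := by
          intro h
          simp only [hS, Set.mem_union, Set.mem_insert_iff, Set.mem_singleton_iff,
            Set.mem_setOf_eq, Prod.mk.injEq] at h
          rcases h with ((⟨a1, a2⟩ | ⟨a1, a2⟩ | ⟨a1, a2⟩ | ⟨a1, a2⟩) |
            ⟨a, b1, b2, b3, b4⟩) | ⟨a, b1, b2, b3, b4⟩ <;> omega
        simp [hg, if_neg hnot]
    · simp
    · intro x y _ _ hx hy; rw [map_add, hx, hy, add_zero]
    · intro a x _ hx; rw [smul_eq_mul, map_mul, hx, mul_zero]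
  rw [← hfix, hzero]
end

section
/- Over a field K, consider the polynomial map β̂ : K^{2n} → K^{n(n−1)/2} sending (s_1,…,s_n,t_1,…,t_n) to the point with coordinates x_{1j} = s_1 t_j + s_j t_1 (j ≥ 2) and x_{ij} = s_i t_j (1 < i < j ≤ n). Then every point in the image of β̂ satisfies all 2×2 minors det of the submatrices Ω_{{i,j},{k,ℓ}} with 1 < i < j < k < ℓ ≤ n and all 3×3 minors of Ω_{{1,i_2,i_3},{j_1,j_2,j_3}} with 1 < i_2 < j_1 < j_2 < j_3 < i_3 ≤ n, where Ω is the skew-symmetric matrix with (i,j) entry x_{ij} for i < j. -/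
/-- Over a field `K`, define the point with coordinates `x_{1j} = s_1 t_j + s_j t_1`
(for `j ≥ 2`) and `x_{ij} = s_i t_j` (for `1 < i < j ≤ n`).  Every such point (i.e.,
every point in the image of the map `β̂ : K^{2n} → K^{n(n−1)/2}`) satisfies all the
2×2 minors `det Ω_{{i,j},{k,ℓ}}` with `1 < i < j < k < ℓ ≤ n` and all the 3×3 minors
`det Ω_{{1,i₂,i₃},{j₁,j₂,j₃}}` with `1 < i₂ < j₁ < j₂ < j₃ < i₃ ≤ n`, where `Ω` is the
skew-symmetric matrix with `(i,j)` entry `x_{ij}` for `i < j`. -/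
theorem image_satisfies_minors {K : Type*} [Field K] (n : ℕ) (s t : ℕ → K)
    (x : ℕ → ℕ → K)
    (hx1 : ∀ j, 1 < j → j ≤ n → x 1 j = s 1 * t j + s j * t 1)
    (hx : ∀ i j, 1 < i → i < j → j ≤ n → x i j = s i * t j) :
    (∀ i j k ℓ, 1 < i → i < j → j < k → k < ℓ → ℓ ≤ n →
      Matrix.det !![x i k, x i ℓ; x j k, x j ℓ] = 0) ∧
    (∀ i₂ j₁ j₂ j₃ i₃, 1 < i₂ → i₂ < j₁ → j₁ < j₂ → j₂ < j₃ → j₃ < i₃ → i₃ ≤ n →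
      Matrix.det !![x 1 j₁, x 1 j₂, x 1 j₃;
                    x i₂ j₁, x i₂ j₂, x i₂ j₃;
                    -(x j₁ i₃), -(x j₂ i₃), -(x j₃ i₃)] = 0) := by
  constructor
  · intro i j k ℓ h1 h2 h3 h4 h5
    rw [hx i k h1 (h2.trans h3) (h4.le.trans h5), hx i ℓ h1 (h2.trans (h3.trans h4)) h5,
      hx j k (h1.trans h2) h3 (h4.le.trans h5), hx j ℓ (h1.trans h2) (h3.trans h4) h5]
    simp [Matrix.det_fin_two]; ring
  · intro i₂ j₁ j₂ j₃ i₃ h1 h2 h3 h4 h5 h6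
    have hj1 : 1 < j₁ := h1.trans h2
    have hj2 : 1 < j₂ := hj1.trans h3
    have hj3 : 1 < j₃ := hj2.trans h4
    rw [hx1 j₁ hj1 ((h3.trans (h4.trans h5)).le.trans h6),
      hx1 j₂ hj2 ((h4.trans h5).le.trans h6), hx1 j₃ hj3 (h5.le.trans h6),
      hx i₂ j₁ h1 h2 ((h3.trans (h4.trans h5)).le.trans h6),
      hx i₂ j₂ h1 (h2.trans h3) ((h4.trans h5).le.trans h6),
      hx i₂ j₃ h1 (h2.trans (h3.trans h4)) (h5.le.trans h6),
      hx j₁ i₃ hj1 (h3.trans (h4.trans h5)) h6,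
      hx j₂ i₃ hj2 (h4.trans h5) h6, hx j₃ i₃ hj3 h5 h6]
    simp [Matrix.det_fin_three]; ring
end
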